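/- Let a be a coercive bounded operator on H₁ and m a coercive bounded operator on H₀, and let Λ : BD(G) → BD(D) be the Dirichlet-to-Neumann operator associated with −DaG + m. Then Λ is a bounded bijective operator from BD(G) onto BD(D) with bounded inverse. Moreover, Λu₀ = π_{BD(D)} of the second component of (m, −D; −G̊, a⁻¹)^{-1}(−mu₀, Gu₀) for all u₀ ∈ BD(G), and Λ^{-1}q₀ = π_{BD(G)} of the first component of (m, −D̊; −G, a⁻¹)^{-1}(Dq₀, −a⁻¹q₀) for all q₀ ∈ BD(D). -/

import Mathlib

open Filter Topology

noncomputable section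

namespace DtNPaper

local notation "⟪" x ", " y "⟫" => (inner ℂ x y : ℂ)

/-- Membership in the abstract boundary data space `BD(T)`: `u ∈ dom T`
(with `p = T u`, i.e. `(u, p)` in the graph of `T`) and `u` is orthogonal to
`dom T̊` with respect to the graph inner product of `dom T`. -/
def memBD {E F : Type*} [NormedAddCommGroup E] [InnerProductSpace ℂ E]
    [NormedAddCommGroup F] [InnerProductSpace ℂ F]
    (T Ti : E →ₗ.[ℂ] F) (u : E) : Prop :=
  ∃ p : F, (u, p) ∈ T.graph ∧ ∀ v w, (v, w) ∈ Ti.graph → ⟪v, u⟫ + ⟪w, p⟫ = 0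

/-- A bounded operator `M` is coercive if `Re (M x, x) ≥ μ ‖x‖²` for some `μ > 0`. -/
def Coercive {E : Type*} [NormedAddCommGroup E] [InnerProductSpace ℂ E]
    (M : E →L[ℂ] E) : Prop :=
  ∃ μ : ℝ, 0 < μ ∧ ∀ x : E, μ * ‖x‖ ^ 2 ≤ (⟪x, M x⟫).re

/-- Sequential formulation of compactness of the inclusion of `dom T`
(graph norm) into `E`. -/
def CompactIncl {E F : Type*} [NormedAddCommGroup E] [InnerProductSpace ℂ E]
    [NormedAddCommGroup F] [InnerProductSpace ℂ F] (T : E →ₗ.[ℂ] F) : Prop :=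
  ∀ (u : ℕ → E) (p : ℕ → F), (∀ n, (u n, p n) ∈ T.graph) →
    (∃ C : ℝ, ∀ n, ‖u n‖ ^ 2 + ‖p n‖ ^ 2 ≤ C) →
    ∃ φ : ℕ → ℕ, StrictMono φ ∧ ∃ x : E, Tendsto (fun j => u (φ j)) atTop (𝓝 x)

/-- The range of a partially defined linear operator, as a set. -/
def ranSet {E F : Type*} [NormedAddCommGroup E] [InnerProductSpace ℂ E]
    [NormedAddCommGroup F] [InnerProductSpace ℂ F] (T : E →ₗ.[ℂ] F) : Set F :=
  {p | ∃ u, (u, p) ∈ T.graph}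

/-- The Dirichlet-to-Neumann graph associated with `-D a G + m`:
the set of pairs `(π_{BD(G)} u, π_{BD(D)} (a G u))` where `u ∈ dom (D a G)` and
`m u - D a G u = 0`.  The orthogonal projections onto the boundary data spaces
are characterised by membership in `BD` together with the difference lying in
the domain of the corresponding minimal operator. -/
def dtnGraph {E F : Type*} [NormedAddCommGroup E] [InnerProductSpace ℂ E]
    [NormedAddCommGroup F] [InnerProductSpace ℂ F]
    (G Gi : E →ₗ.[ℂ] F) (D Di : F →ₗ.[ℂ] E)
    (a : F →L[ℂ] F) (m : E →L[ℂ] E) : Set (E × F) :=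
  {z | ∃ u p, (u, p) ∈ G.graph ∧ (a p, m u) ∈ D.graph ∧
    memBD G Gi z.1 ∧ u - z.1 ∈ Gi.domain ∧
    memBD D Di z.2 ∧ a p - z.2 ∈ Di.domain}

/-- The Dirichlet-to-Neumann graph in `H`: `(φ, ψ)` belongs to it if there is
`u₀ ∈ BD(G)` with `κ u₀ = φ` and `Λ u₀ = G (κ* ψ)`; here `k` is `κ` and
`kstarG` is the map `ψ ↦ G (κ* ψ)`. -/
def dtnGraphH {E F HS : Type*} [NormedAddCommGroup E] [InnerProductSpace ℂ E]
    [NormedAddCommGroup F] [InnerProductSpace ℂ F]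
    [NormedAddCommGroup HS] [InnerProductSpace ℂ HS]
    (G Gi : E →ₗ.[ℂ] F) (D Di : F →ₗ.[ℂ] E)
    (a : F →L[ℂ] F) (m : E →L[ℂ] E)
    (k : E → HS) (kstarG : HS → F) : Set (HS × HS) :=
  {z | ∃ u₀ : E, memBD G Gi u₀ ∧ k u₀ = z.1 ∧
    (u₀, kstarG z.2) ∈ dtnGraph G Gi D Di a m}

section Aux
variable {E F : Type*} [NormedAddCommGroup E] [InnerProductSpace ℂ E]
  [NormedAddCommGroup F] [InnerProductSpace ℂ F]

section GenHilbert
variable {H : Type*} [NormedAddCommGroup H] [InnerProductSpace ℂ H]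

theorem coercive_norm_le {T : H →L[ℂ] H} {μ : ℝ} (hμ : 0 < μ)
    (hc : ∀ x : H, μ * ‖x‖ ^ 2 ≤ (⟪x, T x⟫).re) (x : H) : μ * ‖x‖ ≤ ‖T x‖ := by
  rcases eq_or_ne x 0 with rfl | hx
  · simp
  have hx' : 0 < ‖x‖ := norm_pos_iff.2 hx
  have h1 : μ * ‖x‖ ^ 2 ≤ ‖x‖ * ‖T x‖ := (hc x).trans <| by
    calc (⟪x, T x⟫).re ≤ ‖(⟪x, T x⟫)‖ := Complex.re_le_norm _
      _ ≤ ‖x‖ * ‖T x‖ := norm_inner_le_norm _ _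
  nlinarith

theorem coercive_surj [CompleteSpace H] {T : H →L[ℂ] H} {μ : ℝ} (hμ : 0 < μ)
    (hc : ∀ x : H, μ * ‖x‖ ^ 2 ≤ (⟪x, T x⟫).re) : Function.Surjective T := by
  have hlow := coercive_norm_le hμ hc
  have hanti : AntilipschitzWith ⟨μ⁻¹, by positivity⟩ T :=
    T.antilipschitz_of_bound fun x => by
      change ‖x‖ ≤ μ⁻¹ * ‖T x‖
      calc ‖x‖ = μ⁻¹ * (μ * ‖x‖) := by field_simp
        _ ≤ μ⁻¹ * ‖T x‖ := by
            exact mul_le_mul_of_nonneg_left (hlow x) (by positivity)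
  have hcl : IsClosed (Set.range T) := hanti.isClosed_range T.uniformContinuous
  set R : Submodule ℂ H := LinearMap.range (T : H →ₗ[ℂ] H) with hR
  have hclR : IsClosed (R : Set H) := by
    convert hcl using 1
    exact LinearMap.coe_range (T : H →ₗ[ℂ] H)
  haveI : CompleteSpace R := hclR.completeSpace_coe
  have horth : Rᗮ = ⊥ := by
    rw [Submodule.eq_bot_iff]
    intro y hy
    have h0 : (⟪y, T y⟫ : ℂ) = 0 := by
      have := (Submodule.mem_orthogonal R y).1 hy (T y) (LinearMap.mem_range.2 ⟨y, rfl⟩)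
      simpa [inner_eq_zero_symm] using this
    have := hc y
    rw [h0] at this
    have h2 : μ * ‖y‖ ^ 2 ≤ 0 := by simpa using this
    have h3 : ‖y‖ ^ 2 ≤ 0 := le_of_mul_le_mul_left (by simpa using h2) hμ
    have h4 : ‖y‖ ^ 2 = 0 := le_antisymm h3 (sq_nonneg _)
    have h5 : ‖y‖ = 0 := by
      have := pow_eq_zero_iff (n := 2) (by norm_num) |>.1 h4
      exact this
    exact norm_eq_zero.1 h5
  have hRtop : R = ⊤ := by
    have := Submodule.orthogonal_orthogonal (K := R)
    rw [horth, Submodule.bot_orthogonal_eq_top] at this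
    exact this.symm
  intro y
  have : y ∈ R := hRtop ▸ Submodule.mem_top
  exact LinearMap.mem_range.1 this


theorem decomp [CompleteSpace H] (V : Submodule ℂ H) (hV : IsClosed (V : Set H)) (z : H) :
    ∃ g ∈ V, z - g ∈ Vᗮ := by
  haveI : CompleteSpace V := hV.completeSpace_coe
  exact ⟨V.orthogonalProjectionOnto z, (V.orthogonalProjectionOnto z).2,
    Submodule.sub_starProjection_mem_orthogonal z⟩

theorem solve_variational [CompleteSpace H]
    (V : Submodule ℂ H) (hV : IsClosed (V : Set H)) (T : H →L[ℂ] H) {μ : ℝ} (hμ : 0 < μ)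
    (hc : ∀ x : H, μ * ‖x‖ ^ 2 ≤ (⟪x, T x⟫).re) (h : H) :
    ∃ z ∈ V, ∀ y ∈ V, ⟪y, T z - h⟫ = 0 := by
  haveI : CompleteSpace V := hV.completeSpace_coe
  set P := V.orthogonalProjectionOnto with hP
  set S : V →L[ℂ] V := P.comp (T.comp V.subtypeL) with hS
  have key : ∀ (x : V) (w : H), (⟪(x : H), w - (P w : H)⟫ : ℂ) = 0 := fun x w =>
    (Submodule.mem_orthogonal V _).1 (Submodule.sub_starProjection_mem_orthogonal w) x x.2
  have hcS : ∀ x : V, μ * ‖x‖ ^ 2 ≤ (⟪x, S x⟫).re := by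
    intro x
    have h1 : (⟪x, S x⟫ : ℂ) = ⟪(x : H), T x⟫ := by
      rw [Submodule.coe_inner]
      have h2 : (⟪(x : H), T x⟫ : ℂ) = ⟪(x : H), (P (T x) : H)⟫ + ⟪(x : H), T x - (P (T x) : H)⟫ := by
        rw [← inner_add_right]
        congr 1; abel
      rw [h2, key x (T x), add_zero]
      rfl
    rw [h1]
    have : ‖x‖ = ‖(x : H)‖ := rfl
    rw [this]
    exact hc x
  obtain ⟨z, hz⟩ := coercive_surj hμ hcS (P h)
  refine ⟨z, z.2, fun y hy => ?_⟩
  have hmem : T z - h ∈ Vᗮ := by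
    have h0 : (P (T z - h) : H) = 0 := by
      have : P (T z - h) = P (T z) - P h := map_sub P _ _
      rw [this]
      have : P (T (z : H)) = P h := hz
      rw [this, sub_self]; rfl
    have : T z - h - (P (T z - h) : H) ∈ Vᗮ := Submodule.sub_starProjection_mem_orthogonal (K := V) (T z - h)
    rwa [h0, sub_zero] at this
  exact (Submodule.mem_orthogonal V _).1 hmem y hy

end GenHilbert

abbrev Hp (E F : Type*) [NormedAddCommGroup E] [InnerProductSpace ℂ E]
    [NormedAddCommGroup F] [InnerProductSpace ℂ F] : Type _ := WithLp 2 (E × F)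

def mk2 (a : E) (b : F) : Hp E F := (WithLp.equiv 2 (E × F)).symm (a, b)

@[simp] theorem mk2_fst (a : E) (b : F) : (mk2 a b).fst = a := rfl
@[simp] theorem mk2_snd (a : E) (b : F) : (mk2 a b).snd = b := rfl
theorem mk2_eta (x : Hp E F) : mk2 x.fst x.snd = x := rfl
@[simp] theorem mk2_sub (a c : E) (b d : F) : mk2 a b - mk2 c d = mk2 (a - c) (b - d) := rfl
@[simp] theorem mk2_add (a c : E) (b d : F) : mk2 a b + mk2 c d = mk2 (a + c) (b + d) := rfl

theorem inner_mk2 (a c : E) (b d : F) : (⟪mk2 a b, mk2 c d⟫ : ℂ) = ⟪a, c⟫ + ⟪b, d⟫ :=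
  WithLp.prod_inner_apply _ _

theorem norm_mk2_sq (a : E) (b : F) : ‖mk2 a b‖ ^ 2 = ‖a‖ ^ 2 + ‖b‖ ^ 2 :=
  WithLp.prod_norm_sq_eq_of_L2 _

/-- The graph of a partially defined operator as a submodule of the `L²` product. -/
def gsub (T : E →ₗ.[ℂ] F) : Submodule ℂ (Hp E F) :=
  T.graph.comap (WithLp.linearEquiv 2 ℂ (E × F)).toLinearMap

theorem mem_gsub {T : E →ₗ.[ℂ] F} {x : Hp E F} : x ∈ gsub T ↔ (x.fst, x.snd) ∈ T.graph :=
  Iff.rfl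

theorem mem_gsub_mk2 {T : E →ₗ.[ℂ] F} {a : E} {b : F} :
    mk2 a b ∈ gsub T ↔ (a, b) ∈ T.graph := Iff.rfl

theorem gsub_closed {T : E →ₗ.[ℂ] F} (h : IsClosed (T.graph : Set (E × F))) :
    IsClosed ((gsub T : Submodule ℂ (Hp E F)) : Set (Hp E F)) :=
  h.preimage (WithLp.prodContinuousLinearEquiv 2 ℂ E F).continuous

/-- swap isometry -/
def swapIso : Hp E F ≃ₗᵢ[ℂ] Hp F E where
  toLinearEquiv := (WithLp.linearEquiv 2 ℂ (E × F)).trans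
    ((LinearEquiv.prodComm ℂ E F).trans (WithLp.linearEquiv 2 ℂ (F × E)).symm)
  norm_map' := by
    intro x
    rw [WithLp.prod_norm_eq_of_L2, WithLp.prod_norm_eq_of_L2]
    rw [add_comm]
    rfl

@[simp] theorem swapIso_mk2 (a : E) (b : F) : (swapIso (mk2 a b) : Hp F E) = mk2 b a := rfl

/-- block diagonal operator -/
def diagOp (m : E →L[ℂ] E) (a : F →L[ℂ] F) : Hp E F →L[ℂ] Hp E F :=
  ((WithLp.prodContinuousLinearEquiv 2 ℂ E F).symm.toContinuousLinearMap.comp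
    (m.prodMap a)).comp (WithLp.prodContinuousLinearEquiv 2 ℂ E F).toContinuousLinearMap

@[simp] theorem diagOp_mk2 (m : E →L[ℂ] E) (a : F →L[ℂ] F) (x : E) (y : F) :
    diagOp m a (mk2 x y) = mk2 (m x) (a y) := rfl

theorem graph_unique {T : E →ₗ.[ℂ] F} {u : E} {p q : F}
    (hp : (u, p) ∈ T.graph) (hq : (u, q) ∈ T.graph) : p = q := by
  have : ((u, p) - (u, q)) ∈ T.graph := T.graph.sub_mem hp hq
  have h0 : ((0 : E), p - q) ∈ T.graph := by simpa using this
  have := T.graph_fst_eq_zero_snd h0 rfl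
  linear_combination (norm := abel) this

set_option maxHeartbeats 1000000 in
set_option synthInstance.maxHeartbeats 200000 in
/-- The duality lemma: if `A = -B*` (as expressed by `hA`) and `B` is closed,
then `B = -A*`. -/
theorem dual_graph [CompleteSpace E] [CompleteSpace F]
    (A : E →ₗ.[ℂ] F) (B : F →ₗ.[ℂ] E)
    (hB : IsClosed (B.graph : Set (F × E)))
    (hA : ∀ u w, (u, w) ∈ A.graph ↔ ∀ q s, (q, s) ∈ B.graph → ⟪w, q⟫ = -⟪u, s⟫) :
    ∀ q s, (q, s) ∈ B.graph ↔ ∀ u w, (u, w) ∈ A.graph → ⟪u, s⟫ + ⟪w, q⟫ = 0 := by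
  set σ : Hp F E ≃ₗᵢ[ℂ] Hp E F := swapIso
  set K : Submodule ℂ (Hp E F) := (gsub B).map σ.toLinearEquiv.toLinearMap with hK
  have hmemK : ∀ x : Hp E F, x ∈ K ↔ (x.snd, x.fst) ∈ B.graph := by
    intro x
    constructor
    · rintro ⟨y, hy, rfl⟩
      exact hy
    · intro hx
      exact ⟨mk2 x.snd x.fst, hx, rfl⟩
  have hKcl : IsClosed (K : Set (Hp E F)) := by
    have : (K : Set (Hp E F)) = σ.toHomeomorph '' (gsub B : Set (Hp F E)) := by
      ext x; simp [hK, Submodule.mem_map]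
    rw [this, σ.toHomeomorph.isClosed_image]
    exact gsub_closed hB
  haveI : CompleteSpace K := hKcl.completeSpace_coe
  haveI : Submodule.HasOrthogonalProjection K := Submodule.HasOrthogonalProjection.ofCompleteSpace K
  have hAK : gsub A = Kᗮ := by
    ext x
    rw [mem_gsub, hA, Submodule.mem_orthogonal]
    constructor
    · intro h u hu
      have hu' := (hmemK u).1 hu
      have h1 := h u.snd u.fst hu'
      have h2 : (⟪x.fst, u.fst⟫ + ⟪x.snd, u.snd⟫ : ℂ) = 0 := by linear_combination h1
      have h3 : (⟪u.fst, x.fst⟫ + ⟪u.snd, x.snd⟫ : ℂ) = 0 := by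
        have := congrArg (starRingEnd ℂ) h2
        simpa [inner_conj_symm] using this
      calc (⟪u, x⟫ : ℂ) = ⟪u.fst, x.fst⟫ + ⟪u.snd, x.snd⟫ := WithLp.prod_inner_apply u x
        _ = 0 := h3
    · intro h q s hqs
      have h1 := h (mk2 s q) ((hmemK _).2 hqs)
      rw [show (⟪mk2 s q, x⟫ : ℂ) = ⟪s, x.fst⟫ + ⟪q, x.snd⟫ from WithLp.prod_inner_apply _ _] at h1
      have h2 : (⟪x.fst, s⟫ + ⟪x.snd, q⟫ : ℂ) = 0 := by
        have := congrArg (starRingEnd ℂ) h1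
        simpa [inner_conj_symm] using this
      linear_combination h2
  have hKK : Kᗮᗮ = K := Submodule.orthogonal_orthogonal (K := K)
  intro q s
  have hiff : (q, s) ∈ B.graph ↔ mk2 s q ∈ K := by rw [hmemK]; exact Iff.rfl
  rw [hiff, ← hKK, ← hAK, Submodule.mem_orthogonal]
  constructor
  · intro h u w huw
    have := h (mk2 u w) (mem_gsub_mk2.2 huw)
    rwa [inner_mk2] at this
  · intro h y hy
    rw [mem_gsub] at hy
    have := h y.fst y.snd hy
    calc (⟪y, mk2 s q⟫ : ℂ) = ⟪y.fst, s⟫ + ⟪y.snd, q⟫ := WithLp.prod_inner_apply _ _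
      _ = 0 := this

theorem re_symm (x y : E) : (⟪x, y⟫ : ℂ).re = (⟪y, x⟫ : ℂ).re := by
  have h := inner_re_symm (𝕜 := ℂ) x y
  simpa [RCLike.re_to_complex] using h

theorem inner_self_re (x : E) : (⟪x, x⟫ : ℂ).re = ‖x‖ ^ 2 := by
  have h := inner_self_eq_norm_sq (𝕜 := ℂ) x
  simpa [RCLike.re_to_complex] using h

theorem norm_le_of_inner_eq {A S : E} (h : (⟪A, S - A⟫ : ℂ) = 0) : ‖A‖ ≤ ‖S‖ := by
  have h1 : (⟪A, S⟫ : ℂ) = ⟪A, A⟫ := by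
    have := inner_sub_right (𝕜 := ℂ) A S A
    rw [h] at this
    linear_combination -this
  have h2 : ‖A‖ ^ 2 ≤ ‖A‖ * ‖S‖ := by
    calc ‖A‖ ^ 2 = (⟪A, A⟫ : ℂ).re := (inner_self_re A).symm
      _ = (⟪A, S⟫ : ℂ).re := by rw [h1]
      _ ≤ ‖(⟪A, S⟫ : ℂ)‖ := Complex.re_le_norm _
      _ ≤ ‖A‖ * ‖S‖ := norm_inner_le_norm _ _
  rcases eq_or_lt_of_le (norm_nonneg A) with hA | hA
  · rw [← hA]; exact norm_nonneg S
  · nlinarith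

theorem both_zero {c c' : ℝ} (hc : 0 < c) (hc' : 0 < c') {x : E} {y : F}
    (h : c * ‖x‖ ^ 2 + c' * ‖y‖ ^ 2 ≤ 0) : x = 0 ∧ y = 0 := by
  constructor
  · have : ‖x‖ ^ 2 ≤ 0 := by nlinarith [sq_nonneg ‖x‖, sq_nonneg ‖y‖]
    have h4 : ‖x‖ ^ 2 = 0 := le_antisymm this (sq_nonneg _)
    exact norm_eq_zero.1 (pow_eq_zero_iff (n := 2) (by norm_num) |>.1 h4)
  · have : ‖y‖ ^ 2 ≤ 0 := by nlinarith [sq_nonneg ‖x‖, sq_nonneg ‖y‖]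
    have h4 : ‖y‖ ^ 2 = 0 := le_antisymm this (sq_nonneg _)
    exact norm_eq_zero.1 (pow_eq_zero_iff (n := 2) (by norm_num) |>.1 h4)

theorem val_mem_sub {S T : E →ₗ.[ℂ] F} (hST : S.graph ≤ T.graph) {v : E} {w : F}
    (hv : v ∈ S.domain) (hw : (v, w) ∈ T.graph) : (v, w) ∈ S.graph := by
  obtain ⟨w', hw'⟩ := LinearPMap.mem_domain_iff.1 hv
  rwa [← graph_unique hw (hST hw')] at hw'

theorem inv_coercive {a ainv : F →L[ℂ] F} (ha : ∃ μ : ℝ, 0 < μ ∧ ∀ x : F, μ * ‖x‖ ^ 2 ≤ (⟪x, a x⟫).re)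
    (hai : ∀ x, ainv (a x) = x ∧ a (ainv x) = x) :
    ∃ c : ℝ, 0 < c ∧ ∀ x : F, c * ‖x‖ ^ 2 ≤ (⟪x, ainv x⟫).re := by
  obtain ⟨μ, hμ, hc⟩ := ha
  refine ⟨μ / (‖a‖ ^ 2 + 1), by positivity, fun x => ?_⟩
  set z := ainv x with hz
  have hx : x = a z := (hai x).2.symm
  have h1 : μ * ‖z‖ ^ 2 ≤ (⟪x, ainv x⟫).re := by
    rw [hz, ← hz, hx]
    rw [re_symm (a z) z]
    exact hc z
  have h2 : ‖x‖ ^ 2 ≤ (‖a‖ ^ 2 + 1) * ‖z‖ ^ 2 := by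
    have := a.le_opNorm z
    rw [hx]
    nlinarith [norm_nonneg (a z), norm_nonneg z, norm_nonneg a, sq_nonneg ‖z‖]
  rw [div_mul_eq_mul_div, div_le_iff₀ (by positivity)]
  calc μ * ‖x‖ ^ 2 ≤ μ * ((‖a‖ ^ 2 + 1) * ‖z‖ ^ 2) := by nlinarith
    _ = μ * ‖z‖ ^ 2 * (‖a‖ ^ 2 + 1) := by ring
    _ ≤ (⟪x, ainv x⟫).re * (‖a‖ ^ 2 + 1) := by nlinarith [h1]

theorem diag_coercive {m : E →L[ℂ] E} {a : F →L[ℂ] F}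
    {μm μa : ℝ} (hm : ∀ x : E, μm * ‖x‖ ^ 2 ≤ (⟪x, m x⟫).re)
    (ha : ∀ x : F, μa * ‖x‖ ^ 2 ≤ (⟪x, a x⟫).re) (hμm : 0 < μm) (hμa : 0 < μa) :
    ∀ x : Hp E F, min μm μa * ‖x‖ ^ 2 ≤ (⟪x, diagOp m a x⟫).re := by
  intro x
  have hx : diagOp m a x = mk2 (m x.fst) (a x.snd) := by rw [← mk2_eta x]; rfl
  have h1 : (⟪x, diagOp m a x⟫ : ℂ) = ⟪x.fst, m x.fst⟫ + ⟪x.snd, a x.snd⟫ := by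
    rw [hx]
    exact inner_mk2 x.fst (m x.fst) x.snd (a x.snd) ▸ congrArg _ rfl
  rw [h1, Complex.add_re]
  have h2 : ‖x‖ ^ 2 = ‖x.fst‖ ^ 2 + ‖x.snd‖ ^ 2 := WithLp.prod_norm_sq_eq_of_L2 x
  rw [h2]
  have := hm x.fst
  have := ha x.snd
  have h3 : min μm μa ≤ μm := min_le_left _ _
  have h4 : min μm μa ≤ μa := min_le_right _ _
  nlinarith [sq_nonneg ‖x.fst‖, sq_nonneg ‖x.snd‖]


section Adjoints

theorem gsub_eq_orth (A : E →ₗ.[ℂ] F) (B : F →ₗ.[ℂ] E)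
    (hA : ∀ u w, (u, w) ∈ A.graph ↔ ∀ q s, (q, s) ∈ B.graph → ⟪w, q⟫ = -⟪u, s⟫) :
    gsub A = ((gsub B).map (swapIso (E := F) (F := E)).toLinearEquiv.toLinearMap)ᗮ := by
  set σ : Hp F E ≃ₗᵢ[ℂ] Hp E F := swapIso
  set K : Submodule ℂ (Hp E F) := (gsub B).map σ.toLinearEquiv.toLinearMap with hK
  have hmemK : ∀ x : Hp E F, x ∈ K ↔ (x.snd, x.fst) ∈ B.graph := by
    intro x
    constructor
    · rintro ⟨y, hy, rfl⟩
      exact hy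
    · intro hx
      exact ⟨mk2 x.snd x.fst, hx, rfl⟩
  ext x
  rw [mem_gsub, hA, Submodule.mem_orthogonal]
  constructor
  · intro h u hu
    have hu' := (hmemK u).1 hu
    have h1 := h u.snd u.fst hu'
    have h2 : (⟪x.fst, u.fst⟫ + ⟪x.snd, u.snd⟫ : ℂ) = 0 := by linear_combination h1
    have h3 : (⟪u.fst, x.fst⟫ + ⟪u.snd, x.snd⟫ : ℂ) = 0 := by
      have := congrArg (starRingEnd ℂ) h2
      simpa [inner_conj_symm] using this
    calc (⟪u, x⟫ : ℂ) = ⟪u.fst, x.fst⟫ + ⟪u.snd, x.snd⟫ := WithLp.prod_inner_apply u x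
      _ = 0 := h3
  · intro h q s hqs
    have h1 := h (mk2 s q) ((hmemK _).2 hqs)
    rw [show (⟪mk2 s q, x⟫ : ℂ) = ⟪s, x.fst⟫ + ⟪q, x.snd⟫ from WithLp.prod_inner_apply _ _] at h1
    have h2 : (⟪x.fst, s⟫ + ⟪x.snd, q⟫ : ℂ) = 0 := by
      have := congrArg (starRingEnd ℂ) h1
      simpa [inner_conj_symm] using this
    linear_combination h2

theorem gsub_closed_of_adjoint (A : E →ₗ.[ℂ] F) (B : F →ₗ.[ℂ] E)
    (hA : ∀ u w, (u, w) ∈ A.graph ↔ ∀ q s, (q, s) ∈ B.graph → ⟪w, q⟫ = -⟪u, s⟫) :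
    IsClosed ((gsub A : Submodule ℂ (Hp E F)) : Set (Hp E F)) := by
  rw [gsub_eq_orth A B hA]
  exact Submodule.isClosed_orthogonal _

end Adjoints

section Main

variable {H₀ H₁ : Type*}
  [NormedAddCommGroup H₀] [InnerProductSpace ℂ H₀] [CompleteSpace H₀]
  [NormedAddCommGroup H₁] [InnerProductSpace ℂ H₁] [CompleteSpace H₁]
  {G Gi : H₀ →ₗ.[ℂ] H₁} {D Di : H₁ →ₗ.[ℂ] H₀}
  {a : H₁ →L[ℂ] H₁} {m : H₀ →L[ℂ] H₀}

theorem cancel_G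
    (hGi : ∀ u w, (u, w) ∈ Gi.graph ↔ ∀ q s, (q, s) ∈ D.graph → ⟪w, q⟫ = -⟪u, s⟫)
    {μm μa : ℝ} (hμm : 0 < μm) (hμa : 0 < μa)
    (hcm : ∀ x : H₀, μm * ‖x‖ ^ 2 ≤ (⟪x, m x⟫).re)
    (hca : ∀ x : H₁, μa * ‖x‖ ^ 2 ≤ (⟪x, a x⟫).re)
    {w : H₀} {pw : H₁} (hw : (w, pw) ∈ Gi.graph) (hD : (a pw, m w) ∈ D.graph) :
    w = 0 ∧ pw = 0 := by
  have h1 : (⟪pw, a pw⟫ : ℂ) = -⟪w, m w⟫ := (hGi w pw).1 hw (a pw) (m w) hD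
  have h2 : (⟪pw, a pw⟫ : ℂ).re = -(⟪w, m w⟫ : ℂ).re := by rw [h1]; simp
  have h3 := hca pw
  have h4 := hcm w
  exact both_zero hμm hμa (by linarith)

theorem cancel_D
    (hDi : ∀ q w, (q, w) ∈ Di.graph ↔ ∀ u p, (u, p) ∈ G.graph → ⟪w, u⟫ = -⟪q, p⟫)
    {μm μa : ℝ} (hμm : 0 < μm) (hμa : 0 < μa)
    (hcm : ∀ x : H₀, μm * ‖x‖ ^ 2 ≤ (⟪x, m x⟫).re)
    (hca : ∀ x : H₁, μa * ‖x‖ ^ 2 ≤ (⟪x, a x⟫).re)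
    {w : H₀} {pw : H₁} (hw : (a pw, m w) ∈ Di.graph) (hG : (w, pw) ∈ G.graph) :
    w = 0 ∧ pw = 0 := by
  have h1 : (⟪m w, w⟫ : ℂ) = -⟪a pw, pw⟫ := (hDi (a pw) (m w)).1 hw w pw hG
  have h2 : (⟪w, m w⟫ : ℂ).re = -(⟪pw, a pw⟫ : ℂ).re := by
    rw [re_symm w (m w), h1]
    simp [re_symm (a pw) pw]
  have h3 := hca pw
  have h4 := hcm w
  exact both_zero hμm hμa (by linarith)

theorem bd_unique {E F : Type*} [NormedAddCommGroup E] [InnerProductSpace ℂ E]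
    [NormedAddCommGroup F] [InnerProductSpace ℂ F]
    {T Ti : E →ₗ.[ℂ] F} (hTiT : Ti.graph ≤ T.graph) {x x' : E}
    (h1 : memBD T Ti x) (h2 : memBD T Ti x') (hd : x - x' ∈ Ti.domain) : x = x' := by
  obtain ⟨p, hp, ho⟩ := h1
  obtain ⟨p', hp', ho'⟩ := h2
  have hsub : (x - x', p - p') ∈ T.graph := by
    have := T.graph.sub_mem hp hp'
    simpa using this
  have hTi : (x - x', p - p') ∈ Ti.graph := val_mem_sub hTiT hd hsub
  have e1 := ho (x - x') (p - p') hTi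
  have e2 := ho' (x - x') (p - p') hTi
  have e3 : (⟪x - x', x - x'⟫ + ⟪p - p', p - p'⟫ : ℂ) = 0 := by
    have h5 : (⟪x - x', x⟫ - ⟪x - x', x'⟫ : ℂ) = ⟪x - x', x - x'⟫ := (inner_sub_right _ _ _).symm
    have h6 : (⟪p - p', p⟫ - ⟪p - p', p'⟫ : ℂ) = ⟪p - p', p - p'⟫ := (inner_sub_right _ _ _).symm
    rw [← h5, ← h6]
    linear_combination e1 - e2
  have e4 : ‖x - x'‖ ^ 2 + ‖p - p'‖ ^ 2 = 0 := by
    have := congrArg Complex.re e3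
    rw [Complex.add_re, inner_self_re, inner_self_re] at this; simpa using this
  have : x - x' = 0 := by
    have h7 : ‖x - x'‖ ^ 2 = 0 := by nlinarith [sq_nonneg ‖x - x'‖, sq_nonneg ‖p - p'‖]
    exact norm_eq_zero.1 (pow_eq_zero_iff (n := 2) (by norm_num) |>.1 h7)
  exact sub_eq_zero.1 this

theorem part1
    (hGiG : Gi.graph ≤ G.graph) (hDiD : Di.graph ≤ D.graph)
    (hGi : ∀ u w, (u, w) ∈ Gi.graph ↔ ∀ q s, (q, s) ∈ D.graph → ⟪w, q⟫ = -⟪u, s⟫)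
    (hDi : ∀ q w, (q, w) ∈ Di.graph ↔ ∀ u p, (u, p) ∈ G.graph → ⟪w, u⟫ = -⟪q, p⟫)
    (hdualD : ∀ q s, (q, s) ∈ D.graph ↔ ∀ u w, (u, w) ∈ Gi.graph → ⟪u, s⟫ + ⟪w, q⟫ = 0)
    {μm μa : ℝ} (hμm : 0 < μm) (hμa : 0 < μa)
    (hcm : ∀ x : H₀, μm * ‖x‖ ^ 2 ≤ (⟪x, m x⟫).re)
    (hca : ∀ x : H₁, μa * ‖x‖ ^ 2 ≤ (⟪x, a x⟫).re) :
    ∀ u₀, memBD G Gi u₀ → ∃ q₀, (u₀, q₀) ∈ dtnGraph G Gi D Di a m := by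
  intro u₀ hu₀
  obtain ⟨p₀, hup, horth⟩ := hu₀
  set T : Hp H₀ H₁ →L[ℂ] Hp H₀ H₁ := diagOp m a with hT
  have hTc := diag_coercive hcm hca hμm hμa
  have hμ : 0 < min μm μa := lt_min hμm hμa
  have hVcl := gsub_closed_of_adjoint Gi D hGi
  obtain ⟨z, hzV, hz⟩ := solve_variational (gsub Gi) hVcl T hμ hTc (-(T (mk2 u₀ p₀)))
  have hzG : (z.fst, z.snd) ∈ Gi.graph := mem_gsub.1 hzV
  set u := u₀ + z.fst with hu
  set pu := p₀ + z.snd with hpu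
  have huG : (u, pu) ∈ G.graph := by
    have := G.graph.add_mem hup (hGiG hzG)
    simpa [hu, hpu, Prod.mk_add_mk] using this
  have hsum : T z - -(T (mk2 u₀ p₀)) = mk2 (m u) (a pu) := by
    rw [sub_neg_eq_add]
    have h1 : T z = mk2 (m z.fst) (a z.snd) := by rw [← mk2_eta z]; rfl
    have h2 : T (mk2 u₀ p₀) = mk2 (m u₀) (a p₀) := rfl
    rw [h1, h2, mk2_add, hu, hpu, map_add, map_add,
      add_comm (m z.fst) (m u₀), add_comm (a z.snd) (a p₀)]
  have hDmem : (a pu, m u) ∈ D.graph := by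
    rw [hdualD]
    intro v w hvw
    have h0 := hz (mk2 v w) (mem_gsub_mk2.2 hvw)
    rw [hsum, inner_mk2] at h0
    exact h0
  obtain ⟨g, hgW, hr⟩ := decomp (gsub Di) (gsub_closed_of_adjoint Di G hDi) (mk2 (a pu) (m u))
  have hgDi : (g.fst, g.snd) ∈ Di.graph := mem_gsub.1 hgW
  refine ⟨a pu - g.fst, u, pu, huG, hDmem, ⟨p₀, hup, horth⟩, ?_, ?_, ?_⟩
  · have he : u - u₀ = z.fst := by rw [hu]; abel
    rw [he]
    exact LinearPMap.mem_domain_iff.2 ⟨z.snd, hzG⟩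
  · refine ⟨m u - g.snd, ?_, ?_⟩
    · have := D.graph.sub_mem hDmem (hDiD hgDi)
      simpa [Prod.mk_sub_mk] using this
    · intro v w hvw
      have h0 : (⟪mk2 v w, mk2 (a pu) (m u) - g⟫ : ℂ) = 0 :=
        (Submodule.mem_orthogonal _ _).1 hr (mk2 v w) (mem_gsub_mk2.2 hvw)
      have hsplit : mk2 (a pu) (m u) - g = mk2 (a pu - g.fst) (m u - g.snd) := rfl
      rw [hsplit, inner_mk2] at h0
      exact h0
  · have he : a pu - (a pu - g.fst) = g.fst := by abel
    rw [he]
    exact LinearPMap.mem_domain_iff.2 ⟨g.snd, hgDi⟩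

theorem part4
    (hGiG : Gi.graph ≤ G.graph) (hDiD : Di.graph ≤ D.graph)
    (hGi : ∀ u w, (u, w) ∈ Gi.graph ↔ ∀ q s, (q, s) ∈ D.graph → ⟪w, q⟫ = -⟪u, s⟫)
    (hDi : ∀ q w, (q, w) ∈ Di.graph ↔ ∀ u p, (u, p) ∈ G.graph → ⟪w, u⟫ = -⟪q, p⟫)
    (hGclosed : IsClosed (G.graph : Set (H₀ × H₁)))
    {μm μa : ℝ} (hμm : 0 < μm) (hμa : 0 < μa)
    (hcm : ∀ x : H₀, μm * ‖x‖ ^ 2 ≤ (⟪x, m x⟫).re)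
    (hca : ∀ x : H₁, μa * ‖x‖ ^ 2 ≤ (⟪x, a x⟫).re) :
    ∀ q₀, memBD D Di q₀ → ∃ u₀, (u₀, q₀) ∈ dtnGraph G Gi D Di a m := by
  intro q₀ hq₀
  obtain ⟨s₀, hqs, horth⟩ := hq₀
  set T : Hp H₀ H₁ →L[ℂ] Hp H₀ H₁ := diagOp m a with hT
  have hTc := diag_coercive hcm hca hμm hμa
  have hμ : 0 < min μm μa := lt_min hμm hμa
  obtain ⟨z, hzV, hz⟩ := solve_variational (gsub G) (gsub_closed hGclosed) T hμ hTc (mk2 s₀ q₀)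
  have hzG : (z.fst, z.snd) ∈ G.graph := mem_gsub.1 hzV
  have hDi1 : (a z.snd - q₀, m z.fst - s₀) ∈ Di.graph := by
    rw [hDi]
    intro x px hx
    have h0 := hz (mk2 x px) (mem_gsub_mk2.2 hx)
    have hTz : T z - mk2 s₀ q₀ = mk2 (m z.fst - s₀) (a z.snd - q₀) := by
      rw [show T z = mk2 (m z.fst) (a z.snd) from by rw [← mk2_eta z]; rfl, mk2_sub]
    rw [hTz, inner_mk2] at h0
    have h1 := congrArg (starRingEnd ℂ) h0
    simp only [map_add, inner_conj_symm, map_zero] at h1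
    linear_combination h1
  have hDmem : (a z.snd, m z.fst) ∈ D.graph := by
    have h2 := D.graph.add_mem hqs (hDiD hDi1)
    have he : ((q₀, s₀) : H₁ × H₀) + (a z.snd - q₀, m z.fst - s₀) = (a z.snd, m z.fst) := by
      rw [Prod.mk_add_mk, Prod.mk.injEq]
      constructor <;> abel
    rwa [he] at h2
  obtain ⟨g, hgW, hr⟩ := decomp (gsub Gi) (gsub_closed_of_adjoint Gi D hGi) z
  have hgGi : (g.fst, g.snd) ∈ Gi.graph := mem_gsub.1 hgW
  refine ⟨z.fst - g.fst, z.fst, z.snd, hzG, hDmem, ?_, ?_, ⟨s₀, hqs, horth⟩, ?_⟩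
  · refine ⟨z.snd - g.snd, ?_, ?_⟩
    · have := G.graph.sub_mem hzG (hGiG hgGi)
      simpa [Prod.mk_sub_mk] using this
    · intro v w hvw
      have h0 : (⟪mk2 v w, z - g⟫ : ℂ) = 0 :=
        (Submodule.mem_orthogonal _ _).1 hr _ (mem_gsub_mk2.2 hvw)
      have hsplit : z - g = mk2 (z.fst - g.fst) (z.snd - g.snd) := rfl
      rw [hsplit, inner_mk2] at h0
      exact h0
  · have he : z.fst - (z.fst - g.fst) = g.fst := by abel
    rw [he]
    exact LinearPMap.mem_domain_iff.2 ⟨g.snd, hgGi⟩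
  · exact LinearPMap.mem_domain_iff.2 ⟨m z.fst - s₀, hDi1⟩

theorem part2
    (hGiG : Gi.graph ≤ G.graph) (hDiD : Di.graph ≤ D.graph)
    (hGi : ∀ u w, (u, w) ∈ Gi.graph ↔ ∀ q s, (q, s) ∈ D.graph → ⟪w, q⟫ = -⟪u, s⟫)
    {μm μa : ℝ} (hμm : 0 < μm) (hμa : 0 < μa)
    (hcm : ∀ x : H₀, μm * ‖x‖ ^ 2 ≤ (⟪x, m x⟫).re)
    (hca : ∀ x : H₁, μa * ‖x‖ ^ 2 ≤ (⟪x, a x⟫).re) :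
    ∀ u₀ q₀ q₀', (u₀, q₀) ∈ dtnGraph G Gi D Di a m →
      (u₀, q₀') ∈ dtnGraph G Gi D Di a m → q₀ = q₀' := by
  intro u₀ q₀ q₀' h1 h2
  obtain ⟨u, pu, huG, hD, hbdu, hdu, hbdq, hdq⟩ := h1
  obtain ⟨u', pu', huG', hD', hbdu', hdu', hbdq', hdq'⟩ := h2
  have hw : u - u' ∈ Gi.domain := by
    have h3 := Gi.domain.sub_mem hdu hdu'
    have he : (u - u₀) - (u' - u₀) = u - u' := by abel
    rwa [he] at h3
  have hwG : (u - u', pu - pu') ∈ G.graph := by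
    have := G.graph.sub_mem huG huG'
    simpa [Prod.mk_sub_mk] using this
  have hwGi := val_mem_sub hGiG hw hwG
  have hwD : (a (pu - pu'), m (u - u')) ∈ D.graph := by
    have := D.graph.sub_mem hD hD'
    simpa [Prod.mk_sub_mk, map_sub] using this
  obtain ⟨hw0, hpw0⟩ := cancel_G hGi hμm hμa hcm hca hwGi hwD
  have hpp : pu = pu' := sub_eq_zero.1 hpw0
  apply bd_unique hDiD hbdq hbdq'
  have h4 := Di.domain.sub_mem hdq' hdq
  have he : (a pu' - q₀') - (a pu - q₀) = q₀ - q₀' := by rw [hpp]; abel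
  rwa [he] at h4

theorem part3
    (hGiG : Gi.graph ≤ G.graph) (hDiD : Di.graph ≤ D.graph)
    (hDi : ∀ q w, (q, w) ∈ Di.graph ↔ ∀ u p, (u, p) ∈ G.graph → ⟪w, u⟫ = -⟪q, p⟫)
    {μm μa : ℝ} (hμm : 0 < μm) (hμa : 0 < μa)
    (hcm : ∀ x : H₀, μm * ‖x‖ ^ 2 ≤ (⟪x, m x⟫).re)
    (hca : ∀ x : H₁, μa * ‖x‖ ^ 2 ≤ (⟪x, a x⟫).re) :
    ∀ u₀ u₀' q₀, (u₀, q₀) ∈ dtnGraph G Gi D Di a m →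
      (u₀', q₀) ∈ dtnGraph G Gi D Di a m → u₀ = u₀' := by
  intro u₀ u₀' q₀ h1 h2
  obtain ⟨u, pu, huG, hD, hbdu, hdu, hbdq, hdq⟩ := h1
  obtain ⟨u', pu', huG', hD', hbdu', hdu', hbdq', hdq'⟩ := h2
  have hwG : (u - u', pu - pu') ∈ G.graph := by
    have := G.graph.sub_mem huG huG'
    simpa [Prod.mk_sub_mk] using this
  have hpwdom : a (pu - pu') ∈ Di.domain := by
    have h3 := Di.domain.sub_mem hdq hdq'
    have he : (a pu - q₀) - (a pu' - q₀) = a (pu - pu') := by rw [map_sub]; abel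
    rwa [he] at h3
  have hwD : (a (pu - pu'), m (u - u')) ∈ D.graph := by
    have := D.graph.sub_mem hD hD'
    simpa [Prod.mk_sub_mk, map_sub] using this
  have hwDi := val_mem_sub hDiD hpwdom hwD
  obtain ⟨hw0, hpw0⟩ := cancel_D hDi hμm hμa hcm hca hwDi hwG
  have huu : u = u' := sub_eq_zero.1 hw0
  apply bd_unique hGiG hbdu hbdu'
  have h4 := Gi.domain.sub_mem hdu' hdu
  have he : (u' - u₀') - (u - u₀) = u₀ - u₀' := by rw [huu]; abel
  rwa [he] at h4

theorem part7
    (hGiG : Gi.graph ≤ G.graph)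
    (hGi : ∀ u w, (u, w) ∈ Gi.graph ↔ ∀ q s, (q, s) ∈ D.graph → ⟪w, q⟫ = -⟪u, s⟫)
    {μm c : ℝ} (hμm : 0 < μm) (hc : 0 < c)
    (hcm : ∀ x : H₀, μm * ‖x‖ ^ 2 ≤ (⟪x, m x⟫).re)
    {ainv : H₁ →L[ℂ] H₁}
    (hcainv : ∀ x : H₁, c * ‖x‖ ^ 2 ≤ (⟪x, ainv x⟫).re)
    (hainv : ∀ x, ainv (a x) = x ∧ a (ainv x) = x) :
    ∀ u₀ q₀ p, (u₀, q₀) ∈ dtnGraph G Gi D Di a m → (u₀, p) ∈ G.graph →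
      ∀ x vx y wy, (x, vx) ∈ Gi.graph → (y, wy) ∈ D.graph →
        m x - wy = -(m u₀) → ainv y - vx = p → y - q₀ ∈ Di.domain := by
  intro u₀ q₀ p hmem hu₀p x vx y wy hxv hyw he1 he2
  obtain ⟨u, pu, huG, hD, hbdu, hdu, hbdq, hdq⟩ := hmem
  have hvG : (u - u₀, pu - p) ∈ G.graph := by
    have := G.graph.sub_mem huG hu₀p
    simpa [Prod.mk_sub_mk] using this
  have hvGi : (u - u₀, pu - p) ∈ Gi.graph := val_mem_sub hGiG hdu hvG
  have hdxGi : (x - (u - u₀), vx - (pu - p)) ∈ Gi.graph := by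
    have := Gi.graph.sub_mem hxv hvGi
    simpa [Prod.mk_sub_mk] using this
  have hdyD : (y - a pu, wy - m u) ∈ D.graph := by
    have := D.graph.sub_mem hyw hD
    simpa [Prod.mk_sub_mk] using this
  have hwyid : wy - m u = m (x - (u - u₀)) := by
    have h5 : m x = -(m u₀) + wy := sub_eq_iff_eq_add.1 he1
    rw [map_sub, map_sub, h5]
    abel
  have hvxid : vx - (pu - p) = ainv (y - a pu) := by
    have h5 : ainv y = p + vx := sub_eq_iff_eq_add.1 he2
    rw [map_sub, h5, (hainv pu).1]
    abel
  rw [hvxid] at hdxGi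
  rw [hwyid] at hdyD
  have hpair := (hGi _ _).1 hdxGi (y - a pu) (m (x - (u - u₀))) hdyD
  set dx := x - (u - u₀) with hdx
  set dy := y - a pu with hdy
  have h6 : (⟪dy, ainv dy⟫ : ℂ).re = -(⟪dx, m dx⟫ : ℂ).re := by
    rw [re_symm dy (ainv dy), hpair]
    simp
  have h7 := hcainv dy
  have h8 := hcm dx
  obtain ⟨hdx0, hdy0⟩ := both_zero hμm hc (x := dx) (y := dy) (by linarith)
  have hy : y = a pu := sub_eq_zero.1 hdy0
  rw [hy]
  exact hdq

theorem part8
    (hDiD : Di.graph ≤ D.graph)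
    (hDi : ∀ q w, (q, w) ∈ Di.graph ↔ ∀ u p, (u, p) ∈ G.graph → ⟪w, u⟫ = -⟪q, p⟫)
    {μm c : ℝ} (hμm : 0 < μm) (hc : 0 < c)
    (hcm : ∀ x : H₀, μm * ‖x‖ ^ 2 ≤ (⟪x, m x⟫).re)
    {ainv : H₁ →L[ℂ] H₁}
    (hcainv : ∀ x : H₁, c * ‖x‖ ^ 2 ≤ (⟪x, ainv x⟫).re)
    (hainv : ∀ x, ainv (a x) = x ∧ a (ainv x) = x) :
    ∀ u₀ q₀ s, (u₀, q₀) ∈ dtnGraph G Gi D Di a m → (q₀, s) ∈ D.graph →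
      ∀ x vx y wy, (x, vx) ∈ G.graph → (y, wy) ∈ Di.graph →
        m x - wy = s → ainv y - vx = -(ainv q₀) → x - u₀ ∈ Gi.domain := by
  intro u₀ q₀ s hmem hq₀s x vx y wy hxv hyw he1 he2
  obtain ⟨u, pu, huG, hD, hbdu, hdu, hbdq, hdq⟩ := hmem
  have hyD : (a pu - q₀, m u - s) ∈ D.graph := by
    have := D.graph.sub_mem hD hq₀s
    simpa [Prod.mk_sub_mk] using this
  have hyDi : (a pu - q₀, m u - s) ∈ Di.graph := val_mem_sub hDiD hdq hyD
  have hdxG : (x - u, vx - pu) ∈ G.graph := by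
    have := G.graph.sub_mem hxv huG
    simpa [Prod.mk_sub_mk] using this
  have hdyDi : (y - (a pu - q₀), wy - (m u - s)) ∈ Di.graph := by
    have := Di.graph.sub_mem hyw hyDi
    simpa [Prod.mk_sub_mk] using this
  have hwyid : wy - (m u - s) = m (x - u) := by
    have h5 : m x = s + wy := sub_eq_iff_eq_add.1 he1
    rw [map_sub, h5]
    abel
  have hvxid : vx - pu = ainv (y - (a pu - q₀)) := by
    have h5 : ainv y = -(ainv q₀) + vx := sub_eq_iff_eq_add.1 he2
    rw [map_sub, map_sub, h5, (hainv pu).1]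
    abel
  rw [hwyid] at hdyDi
  rw [hvxid] at hdxG
  have hpair := (hDi _ _).1 hdyDi (x - u) (ainv (y - (a pu - q₀))) hdxG
  set dx := x - u with hdx
  set dy := y - (a pu - q₀) with hdy
  have h6 : (⟪dx, m dx⟫ : ℂ).re = -(⟪dy, ainv dy⟫ : ℂ).re := by
    rw [re_symm dx (m dx), hpair]
    simp
  have h7 := hcainv dy
  have h8 := hcm dx
  obtain ⟨hdx0, hdy0⟩ := both_zero hμm hc (x := dx) (y := dy) (by linarith)
  have hx : x = u := sub_eq_zero.1 hdx0
  rw [hx]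
  exact hdu

theorem sq_le_imp {x y : ℝ} (hx : 0 ≤ x) (hy : 0 ≤ y) (h : x ^ 2 ≤ y ^ 2) : x ≤ y := by
  nlinarith

set_option maxHeartbeats 2000000 in
theorem part6
    (hGiG : Gi.graph ≤ G.graph) (hDiD : Di.graph ≤ D.graph)
    (hDi : ∀ q w, (q, w) ∈ Di.graph ↔ ∀ u p, (u, p) ∈ G.graph → ⟪w, u⟫ = -⟪q, p⟫)
    {μm μa : ℝ} (hμm : 0 < μm) (hμa : 0 < μa)
    (hcm : ∀ x : H₀, μm * ‖x‖ ^ 2 ≤ (⟪x, m x⟫).re)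
    (hca : ∀ x : H₁, μa * ‖x‖ ^ 2 ≤ (⟪x, a x⟫).re) :
    ∃ C : ℝ, ∀ u₀ q₀ p s, (u₀, q₀) ∈ dtnGraph G Gi D Di a m →
      (u₀, p) ∈ G.graph → (q₀, s) ∈ D.graph →
      ‖u₀‖ ^ 2 + ‖p‖ ^ 2 ≤ C * (‖q₀‖ ^ 2 + ‖s‖ ^ 2) := by
  set μ := min μm μa with hμdef
  have hμ : 0 < μ := lt_min hμm hμa
  refine ⟨1 / μ ^ 2, ?_⟩
  intro u₀ q₀ p s hmem hu₀p hq₀s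
  obtain ⟨u, pu, huG, hD, hbdu, hdu, hbdq, hdq⟩ := hmem
  obtain ⟨p₀, hp₀, hou⟩ := hbdu
  have hpp : p = p₀ := graph_unique hu₀p hp₀
  set zu := mk2 u pu with hzu
  set x₀ := mk2 u₀ p with hx₀
  have hvG : (u - u₀, pu - p) ∈ G.graph := by
    have := G.graph.sub_mem huG hu₀p
    simpa [Prod.mk_sub_mk] using this
  have hvGi : (u - u₀, pu - p) ∈ Gi.graph := val_mem_sub hGiG hdu hvG
  have hnorm1 : ‖x₀‖ ≤ ‖zu‖ := by
    apply norm_le_of_inner_eq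
    have hsplit : zu - x₀ = mk2 (u - u₀) (pu - p) := rfl
    have h0 : (⟪mk2 (u - u₀) (pu - p), x₀⟫ : ℂ) = 0 := by
      rw [hx₀, inner_mk2, hpp]
      rw [hpp] at hvGi
      exact hou _ _ hvGi
    rw [hsplit]
    exact inner_eq_zero_symm.1 h0
  have hyDi : (a pu - q₀, m u - s) ∈ Di.graph := by
    refine val_mem_sub hDiD hdq ?_
    have := D.graph.sub_mem hD hq₀s
    simpa [Prod.mk_sub_mk] using this
  have hp2 := (hDi _ _).1 hyDi u pu huG
  have hTzu : (⟪zu, diagOp m a zu⟫ : ℂ)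
      = ⟪zu, mk2 s q₀⟫ + (⟪u, m u - s⟫ + ⟪pu, a pu - q₀⟫) := by
    rw [show diagOp m a zu = mk2 (m u) (a pu) from rfl, hzu, inner_mk2, inner_mk2,
      inner_sub_right, inner_sub_right]
    ring
  have hzero : (⟪u, m u - s⟫ + ⟪pu, a pu - q₀⟫ : ℂ) = 0 := by
    have h5 := congrArg (starRingEnd ℂ) hp2
    simp only [map_neg, inner_conj_symm] at h5
    rw [h5]
    ring
  have hco := diag_coercive hcm hca hμm hμa zu
  have hle : μ * ‖zu‖ ^ 2 ≤ ‖zu‖ * ‖mk2 s q₀‖ := by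
    have h9 : (⟪zu, diagOp m a zu⟫ : ℂ).re = (⟪zu, mk2 s q₀⟫ : ℂ).re := by
      rw [hTzu, hzero, add_zero]
    calc μ * ‖zu‖ ^ 2 ≤ (⟪zu, diagOp m a zu⟫ : ℂ).re := hco
      _ = (⟪zu, mk2 s q₀⟫ : ℂ).re := h9
      _ ≤ ‖(⟪zu, mk2 s q₀⟫ : ℂ)‖ := Complex.re_le_norm _
      _ ≤ ‖zu‖ * ‖mk2 s q₀‖ := norm_inner_le_norm _ _
  have hzb : μ * ‖zu‖ ≤ ‖mk2 s q₀‖ := by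
    rcases eq_or_lt_of_le (norm_nonneg zu) with h | h
    · rw [← h, mul_zero]
      exact norm_nonneg _
    · nlinarith
  have hx₀sq : ‖x₀‖ ^ 2 = ‖u₀‖ ^ 2 + ‖p‖ ^ 2 := norm_mk2_sq _ _
  have hsq : ‖mk2 s q₀‖ ^ 2 = ‖s‖ ^ 2 + ‖q₀‖ ^ 2 := norm_mk2_sq _ _
  have h10 : μ * ‖x₀‖ ≤ ‖mk2 s q₀‖ := le_trans (by nlinarith) hzb
  have h11 : (μ * ‖x₀‖) ^ 2 ≤ ‖mk2 s q₀‖ ^ 2 := by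
    nlinarith [norm_nonneg x₀, norm_nonneg (mk2 s q₀), mul_nonneg hμ.le (norm_nonneg x₀)]
  rw [← hx₀sq, one_div, ← div_eq_inv_mul, le_div_iff₀ (by positivity)]
  nlinarith [h11, hsq]

set_option maxHeartbeats 2000000 in
theorem part5
    (hGiG : Gi.graph ≤ G.graph) (hDiD : Di.graph ≤ D.graph)
    (hGi : ∀ u w, (u, w) ∈ Gi.graph ↔ ∀ q s, (q, s) ∈ D.graph → ⟪w, q⟫ = -⟪u, s⟫)
    {μm μa : ℝ} (hμm : 0 < μm) (hμa : 0 < μa)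
    (hcm : ∀ x : H₀, μm * ‖x‖ ^ 2 ≤ (⟪x, m x⟫).re)
    (hca : ∀ x : H₁, μa * ‖x‖ ^ 2 ≤ (⟪x, a x⟫).re) :
    ∃ C : ℝ, ∀ u₀ q₀ p s, (u₀, q₀) ∈ dtnGraph G Gi D Di a m →
      (u₀, p) ∈ G.graph → (q₀, s) ∈ D.graph →
      ‖q₀‖ ^ 2 + ‖s‖ ^ 2 ≤ C * (‖u₀‖ ^ 2 + ‖p‖ ^ 2) := by
  set μ := min μm μa with hμdef
  have hμ : 0 < μ := lt_min hμm hμa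
  set M := max ‖a‖ ‖m‖ + 1 with hMdef
  have hM : 0 < M := by positivity
  have hMa : ∀ x : H₁, ‖a x‖ ≤ M * ‖x‖ := fun x => le_trans (a.le_opNorm x)
    (by nlinarith [norm_nonneg x, le_max_left ‖a‖ ‖m‖])
  have hMm : ∀ x : H₀, ‖m x‖ ≤ M * ‖x‖ := fun x => le_trans (m.le_opNorm x)
    (by nlinarith [norm_nonneg x, le_max_right ‖a‖ ‖m‖])
  refine ⟨(M + M * M / μ) ^ 2, ?_⟩
  intro u₀ q₀ p s hmem hu₀p hq₀s
  obtain ⟨u, pu, huG, hD, hbdu, hdu, hbdq, hdq⟩ := hmem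
  obtain ⟨p₀, hp₀, hou⟩ := hbdu
  obtain ⟨s₀, hs₀, hoq⟩ := hbdq
  have hpp : p = p₀ := graph_unique hu₀p hp₀
  have hss : s = s₀ := graph_unique hq₀s hs₀
  set A := mk2 q₀ s with hA
  set S := mk2 (a pu) (m u) with hS
  set zu := mk2 u pu with hzu
  set x₀ := mk2 u₀ p with hx₀
  have hgDi : (a pu - q₀, m u - s) ∈ Di.graph := by
    refine val_mem_sub hDiD hdq ?_
    have := D.graph.sub_mem hD hq₀s
    simpa [Prod.mk_sub_mk] using this
  have hA_le : ‖A‖ ≤ ‖S‖ := by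
    apply norm_le_of_inner_eq
    have hsplit : S - A = mk2 (a pu - q₀) (m u - s) := rfl
    have h0 : (⟪mk2 (a pu - q₀) (m u - s), A⟫ : ℂ) = 0 := by
      rw [hA, inner_mk2, hss]
      rw [hss] at hgDi
      exact hoq _ _ hgDi
    rw [hsplit]
    exact inner_eq_zero_symm.1 h0
  have hS_le : ‖S‖ ≤ M * ‖zu‖ := by
    refine sq_le_imp (norm_nonneg _) (by positivity) ?_
    have e1 : ‖S‖ ^ 2 = ‖a pu‖ ^ 2 + ‖m u‖ ^ 2 := norm_mk2_sq _ _
    have e2 : ‖zu‖ ^ 2 = ‖u‖ ^ 2 + ‖pu‖ ^ 2 := norm_mk2_sq _ _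
    have f1 := hMa pu
    have f2 := hMm u
    rw [e1, mul_pow]
    rw [e2]
    nlinarith [norm_nonneg pu, norm_nonneg u, norm_nonneg (a pu), norm_nonneg (m u),
      mul_nonneg hM.le (norm_nonneg pu), mul_nonneg hM.le (norm_nonneg u)]
  have hvG : (u - u₀, pu - p) ∈ G.graph := by
    have := G.graph.sub_mem huG hu₀p
    simpa [Prod.mk_sub_mk] using this
  have hvGi : (u - u₀, pu - p) ∈ Gi.graph := val_mem_sub hGiG hdu hvG
  set v := mk2 (u - u₀) (pu - p) with hv
  have hveq : zu - x₀ = v := rfl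
  have hvT : (⟪v, diagOp m a zu⟫ : ℂ) = 0 := by
    rw [show diagOp m a zu = mk2 (m u) (a pu) from rfl, hv, inner_mk2]
    have h5 := (hGi _ _).1 hvGi (a pu) (m u) hD
    linear_combination h5
  have hco := diag_coercive hcm hca hμm hμa v
  have hvsub : diagOp m a v = diagOp m a zu - diagOp m a x₀ := by rw [← hveq, map_sub]
  have hTx₀ : ‖diagOp m a x₀‖ ≤ M * ‖x₀‖ := by
    refine sq_le_imp (norm_nonneg _) (by positivity) ?_
    have e1 : ‖diagOp m a x₀‖ ^ 2 = ‖m u₀‖ ^ 2 + ‖a p‖ ^ 2 := by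
      rw [show diagOp m a x₀ = mk2 (m u₀) (a p) from rfl]
      exact norm_mk2_sq _ _
    have e2 : ‖x₀‖ ^ 2 = ‖u₀‖ ^ 2 + ‖p‖ ^ 2 := norm_mk2_sq _ _
    have f1 := hMa p
    have f2 := hMm u₀
    rw [e1, mul_pow, e2]
    nlinarith [norm_nonneg p, norm_nonneg u₀, norm_nonneg (a p), norm_nonneg (m u₀),
      mul_nonneg hM.le (norm_nonneg p), mul_nonneg hM.le (norm_nonneg u₀)]
  have hbound : μ * ‖v‖ ^ 2 ≤ ‖v‖ * (M * ‖x₀‖) := by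
    have h2 : (⟪v, diagOp m a v⟫ : ℂ) = -⟪v, diagOp m a x₀⟫ := by
      rw [hvsub, inner_sub_right, hvT]
      ring
    have h3 : (⟪v, diagOp m a v⟫ : ℂ).re ≤ ‖v‖ * (M * ‖x₀‖) :=
      calc (⟪v, diagOp m a v⟫ : ℂ).re = ((-⟪v, diagOp m a x₀⟫ : ℂ)).re := by rw [h2]
        _ ≤ ‖(-⟪v, diagOp m a x₀⟫ : ℂ)‖ := Complex.re_le_norm _
        _ = ‖(⟪v, diagOp m a x₀⟫ : ℂ)‖ := norm_neg _
        _ ≤ ‖v‖ * ‖diagOp m a x₀‖ := norm_inner_le_norm _ _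
        _ ≤ ‖v‖ * (M * ‖x₀‖) := mul_le_mul_of_nonneg_left hTx₀ (norm_nonneg v)
    linarith [hco]
  have hv_le : μ * ‖v‖ ≤ M * ‖x₀‖ := by
    rcases eq_or_lt_of_le (norm_nonneg v) with h | h
    · rw [← h, mul_zero]
      positivity
    · nlinarith
  have hz_le : ‖zu‖ ≤ ‖x₀‖ + ‖v‖ := by
    calc ‖zu‖ = ‖x₀ + v‖ := by rw [← hveq]; congr 1; abel
      _ ≤ ‖x₀‖ + ‖v‖ := norm_add_le _ _
  have h5 : ‖v‖ ≤ M / μ * ‖x₀‖ := by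
    rw [div_mul_eq_mul_div, le_div_iff₀ hμ]
    nlinarith
  have hAfin : ‖A‖ ≤ (M + M * M / μ) * ‖x₀‖ :=
    calc ‖A‖ ≤ ‖S‖ := hA_le
      _ ≤ M * ‖zu‖ := hS_le
      _ ≤ M * (‖x₀‖ + ‖v‖) := mul_le_mul_of_nonneg_left hz_le hM.le
      _ ≤ M * (‖x₀‖ + M / μ * ‖x₀‖) := by nlinarith
      _ = (M + M * M / μ) * ‖x₀‖ := by ring
  have hcoef : 0 ≤ M + M * M / μ := by positivity
  have h6 : ‖A‖ ^ 2 ≤ (M + M * M / μ) ^ 2 * ‖x₀‖ ^ 2 := by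
    nlinarith [norm_nonneg A, norm_nonneg x₀, mul_nonneg hcoef (norm_nonneg x₀)]
  have e3 : ‖A‖ ^ 2 = ‖q₀‖ ^ 2 + ‖s‖ ^ 2 := norm_mk2_sq _ _
  have e4 : ‖x₀‖ ^ 2 = ‖u₀‖ ^ 2 + ‖p‖ ^ 2 := norm_mk2_sq _ _
  rw [← e3, ← e4]
  exact h6

end Main

end Aux

variable {H₀ H₁ HS : Type*}
  [NormedAddCommGroup H₀] [InnerProductSpace ℂ H₀] [CompleteSpace H₀]
  [NormedAddCommGroup H₁] [InnerProductSpace ℂ H₁] [CompleteSpace H₁]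

/-- Theorem 2.14: the Dirichlet-to-Neumann operator `Λ : BD(G) → BD(D)`
associated with `-D a G + m` is bounded and invertible with bounded inverse,
with the representation formulas for `Λ` and `Λ⁻¹` in terms of the block
operators. -/
theorem statement7
    (G Gi : H₀ →ₗ.[ℂ] H₁) (D Di : H₁ →ₗ.[ℂ] H₀)
    (hGdense : Dense (G.domain : Set H₀)) (hDdense : Dense (D.domain : Set H₁))
    (hGclosed : IsClosed (G.graph : Set (H₀ × H₁)))
    (hDclosed : IsClosed (D.graph : Set (H₁ × H₀)))
    (hGi : ∀ u w, (u, w) ∈ Gi.graph ↔ ∀ q s, (q, s) ∈ D.graph → ⟪w, q⟫ = -⟪u, s⟫)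
    (hDi : ∀ q w, (q, w) ∈ Di.graph ↔ ∀ u p, (u, p) ∈ G.graph → ⟪w, u⟫ = -⟪q, p⟫)
    (hGiG : Gi.graph ≤ G.graph) (hDiD : Di.graph ≤ D.graph)
    (a : H₁ →L[ℂ] H₁) (m : H₀ →L[ℂ] H₀)
    (ha : Coercive a) (hm : Coercive m)
    (ainv : H₁ →L[ℂ] H₁) (hainv : ∀ x, ainv (a x) = x ∧ a (ainv x) = x) :
    -- Λ is everywhere defined on BD(G)
    (∀ u₀, memBD G Gi u₀ → ∃ q₀, (u₀, q₀) ∈ dtnGraph G Gi D Di a m) ∧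
    -- Λ is single-valued
    (∀ u₀ q₀ q₀', (u₀, q₀) ∈ dtnGraph G Gi D Di a m →
      (u₀, q₀') ∈ dtnGraph G Gi D Di a m → q₀ = q₀') ∧
    -- Λ is injective
    (∀ u₀ u₀' q₀, (u₀, q₀) ∈ dtnGraph G Gi D Di a m →
      (u₀', q₀) ∈ dtnGraph G Gi D Di a m → u₀ = u₀') ∧
    -- Λ is surjective onto BD(D)
    (∀ q₀, memBD D Di q₀ → ∃ u₀, (u₀, q₀) ∈ dtnGraph G Gi D Di a m) ∧
    -- Λ is bounded (graph norms)
    (∃ C : ℝ, ∀ u₀ q₀ p s, (u₀, q₀) ∈ dtnGraph G Gi D Di a m →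
      (u₀, p) ∈ G.graph → (q₀, s) ∈ D.graph →
      ‖q₀‖ ^ 2 + ‖s‖ ^ 2 ≤ C * (‖u₀‖ ^ 2 + ‖p‖ ^ 2)) ∧
    -- Λ⁻¹ is bounded (graph norms)
    (∃ C : ℝ, ∀ u₀ q₀ p s, (u₀, q₀) ∈ dtnGraph G Gi D Di a m →
      (u₀, p) ∈ G.graph → (q₀, s) ∈ D.graph →
      ‖u₀‖ ^ 2 + ‖p‖ ^ 2 ≤ C * (‖q₀‖ ^ 2 + ‖s‖ ^ 2)) ∧
    -- Λ u₀ = π_{BD(D)} (second component of (m, -D; -G̊, a⁻¹)⁻¹ (-m u₀, G u₀))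
    (∀ u₀ q₀ p, (u₀, q₀) ∈ dtnGraph G Gi D Di a m → (u₀, p) ∈ G.graph →
      ∀ x vx y wy, (x, vx) ∈ Gi.graph → (y, wy) ∈ D.graph →
        m x - wy = -(m u₀) → ainv y - vx = p → y - q₀ ∈ Di.domain) ∧
    -- Λ⁻¹ q₀ = π_{BD(G)} (first component of (m, -D̊; -G, a⁻¹)⁻¹ (D q₀, -a⁻¹ q₀))
    (∀ u₀ q₀ s, (u₀, q₀) ∈ dtnGraph G Gi D Di a m → (q₀, s) ∈ D.graph →
      ∀ x vx y wy, (x, vx) ∈ G.graph → (y, wy) ∈ Di.graph →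
        m x - wy = s → ainv y - vx = -(ainv q₀) → x - u₀ ∈ Gi.domain) := by
  obtain ⟨μa, hμa, hca⟩ := ha
  obtain ⟨μm, hμm, hcm⟩ := hm
  have hdualD := dual_graph Gi D hDclosed hGi
  obtain ⟨c, hc, hcainv⟩ := inv_coercive ⟨μa, hμa, hca⟩ hainv
  exact ⟨part1 hGiG hDiD hGi hDi hdualD hμm hμa hcm hca,
    part2 hGiG hDiD hGi hμm hμa hcm hca,
    part3 hGiG hDiD hDi hμm hμa hcm hca,
    part4 hGiG hDiD hGi hDi hGclosed hμm hμa hcm hca,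
    part5 hGiG hDiD hGi hμm hμa hcm hca,
    part6 hGiG hDiD hDi hμm hμa hcm hca,
    part7 hGiG hGi hμm hc hcm hcainv hainv,
    part8 hDiD hDi hμm hc hcm hcainv hainv⟩

end DtNPaper
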